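/- For every natural number ν, ∑_{k=0}^{2ν+1} (−1)^k · C(2ν+2, k+1) · 2^{−k} · C(2k, k) = (ν+1) · (3/2)_ν / (2)_ν, with the sum taken over rational (or real) numbers. -/

import Mathlib

open Finset

/-- the basic term of Riordan's companion sum -/
private def Fq (n k : ℕ) : ℚ := (-1) ^ k * (n.choose k) * ((2 * k).choose k) / 2 ^ k

/-- companion sum `A n = ∑ (-1)^k C(n,k) C(2k,k) / 2^k` -/
private def Aq (n : ℕ) : ℚ := ∑ k ∈ range (n + 1), Fq n k

/-- the certificate term for the telescoping recurrence -/
private def Gq (n k : ℕ) : ℚ :=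
  (-1) ^ k * k ^ 2 * ((n + 2).choose k) * ((2 * k).choose k) / 2 ^ k

private lemma hchoose (N k : ℕ) :
    ((k : ℚ) + 1) * (N.choose (k + 1)) = ((N : ℚ) - k) * (N.choose k) := by
  rcases le_or_gt k N with h | h
  · have h0 := Nat.choose_succ_right_eq N k
    have h1 := congrArg (Nat.cast : ℕ → ℚ) h0
    push_cast [Nat.cast_sub h] at h1
    linarith
  · rw [Nat.choose_eq_zero_of_lt h, Nat.choose_eq_zero_of_lt (h.trans (Nat.lt_succ_self k))]
    push_cast
    ring

private lemma hcb (k : ℕ) :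
    ((k : ℚ) + 1) * ((2 * (k + 1)).choose (k + 1)) = 2 * (2 * k + 1) * ((2 * k).choose k) := by
  have h0 := Nat.succ_mul_centralBinom_succ k
  have h1 := congrArg (Nat.cast : ℕ → ℚ) h0
  unfold Nat.centralBinom at h1
  push_cast at h1
  linarith

private lemma hch2 (n k : ℕ) :
    ((n : ℚ) + 1) * ((n : ℚ) + 2) * (n.choose k)
      = ((n : ℚ) + 1 - k) * ((n : ℚ) + 2 - k) * ((n + 2).choose k) := by
  have e1 := Nat.add_one_mul_choose_eq n k
  have e2 := Nat.add_one_mul_choose_eq (n + 1) (k + 1)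
  have c1 := congrArg (Nat.cast : ℕ → ℚ) e1
  have c2 := congrArg (Nat.cast : ℕ → ℚ) e2
  push_cast at c1 c2
  have h1a := hchoose (n + 2) k
  have h1b := hchoose (n + 2) (k + 1)
  push_cast at h1a h1b
  linear_combination ((n:ℚ) + 2) * c1 + ((k:ℚ) + 1) * c2 + ((k:ℚ) + 1) * h1b
    + ((n:ℚ) + 1 - k) * h1a


private lemma key (n k : ℕ) :
    ((n:ℚ) + 2) ^ 2 * Fq (n + 2) k - ((n:ℚ) + 1) * ((n:ℚ) + 2) * Fq n k
      = Gq n k - Gq n (k + 1) := by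
  have h1a := hchoose (n + 2) k
  push_cast at h1a
  have h2 := hch2 n k
  have h3 := hcb k
  unfold Fq Gq
  push_cast
  rw [pow_succ, pow_succ]
  linear_combination (-(((-1:ℚ)) ^ k * ((2 * k).choose k : ℚ) / (2:ℚ) ^ k)) * h2
    - ((-1:ℚ) ^ k * ((k:ℚ) + 1) * (((n + 2).choose (k + 1) : ℚ)) / (2 * (2:ℚ) ^ k)) * h3
    - ((2 * (k:ℚ) + 1) * (-1:ℚ) ^ k * ((2 * k).choose k : ℚ) / (2:ℚ) ^ k) * h1a

private lemma A_rec (n : ℕ) :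
    ((n:ℚ) + 2) ^ 2 * Aq (n + 2) = ((n:ℚ) + 1) * ((n:ℚ) + 2) * Aq n := by
  have hA : Aq n = ∑ k ∈ range (n + 3), Fq n k := by
    rw [show n + 3 = (n + 1) + 1 + 1 by ring, sum_range_succ, sum_range_succ]
    have z1 : Fq n (n + 1) = 0 := by
      simp [Fq, Nat.choose_eq_zero_of_lt (Nat.lt_succ_self n)]
    have z2 : Fq n (n + 1 + 1) = 0 := by
      simp [Fq, Nat.choose_eq_zero_of_lt (by omega : n < n + 1 + 1)]
    rw [z1, z2, Aq]
    ring
  have hA2 : Aq (n + 2) = ∑ k ∈ range (n + 3), Fq (n + 2) k := rfl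
  have ht : ∑ k ∈ range (n + 3),
      (((n:ℚ) + 2) ^ 2 * Fq (n + 2) k - ((n:ℚ) + 1) * ((n:ℚ) + 2) * Fq n k)
      = Gq n 0 - Gq n (n + 3) := by
    rw [← Finset.sum_range_sub' (Gq n) (n + 3)]
    exact Finset.sum_congr rfl fun k _ => key n k
  have g0 : Gq n 0 = 0 := by simp [Gq]
  have g1 : Gq n (n + 3) = 0 := by
    simp [Gq, Nat.choose_eq_zero_of_lt (by omega : n + 2 < n + 3)]
  rw [Finset.sum_sub_distrib, ← Finset.mul_sum, ← Finset.mul_sum, ← hA2, ← hA, g0, g1] at ht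
  linarith

private lemma A_odd (m : ℕ) : Aq (2 * m + 1) = 0 := by
  induction m with
  | zero => norm_num [Aq, Fq, Finset.sum_range_succ]
  | succ m ih =>
    have h := A_rec (2 * m + 1)
    rw [show 2 * m + 1 + 2 = 2 * (m + 1) + 1 by ring] at h
    rw [ih] at h
    push_cast at h
    have hne : ((2 * m : ℚ) + 1 + 2) ^ 2 ≠ 0 := by positivity
    have := mul_eq_zero.mp (by linarith [h] : ((2 * m : ℚ) + 1 + 2) ^ 2 * Aq (2 * (m + 1) + 1) = 0)
    tauto

private lemma A_even (m : ℕ) : Aq (2 * m) = ((2 * m).choose m : ℚ) / 4 ^ m := by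
  induction m with
  | zero => norm_num [Aq, Fq, Finset.sum_range_succ]
  | succ m ih =>
    have h := A_rec (2 * m)
    rw [show 2 * m + 2 = 2 * (m + 1) by ring, ih] at h
    push_cast at h
    have hcb' := hcb m
    have h4 : (4:ℚ) ^ m ≠ 0 := by positivity
    have hm : ((m:ℚ) + 1) ≠ 0 := by positivity
    have hne : ((2 * m : ℚ) + 2) ^ 2 ≠ 0 := by positivity
    -- solve: ((2m+2)^2) * Aq (2(m+1)) = (2m+1)(2m+2) * C(2m,m)/4^m
    -- target: Aq (2(m+1)) = C(2m+2,m+1)/4^(m+1)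
    have key2 : ((2 * m : ℚ) + 2) ^ 2 * (((2 * (m + 1)).choose (m + 1) : ℚ) / 4 ^ (m + 1))
        = ((2 * m : ℚ) + 1) * ((2 * m : ℚ) + 2) * (((2 * m).choose m : ℚ) / 4 ^ m) := by
      rw [pow_succ]
      field_simp
      linear_combination (2 * (4:ℚ) ^ m) * hcb'
    have := mul_left_cancel₀ hne (h.trans key2.symm)
    push_cast at this ⊢
    linarith [this]

private def Pq (N : ℕ) : ℚ :=
  ∑ k ∈ range N, (-1 : ℚ) ^ k * (N.choose (k + 1)) * ((2 * k).choose k) / 2 ^ k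

private lemma P_succ (N : ℕ) : Pq (N + 1) = Pq N + Aq N := by
  have hsplit : ∀ k : ℕ,
      (-1 : ℚ) ^ k * ((N + 1).choose (k + 1)) * ((2 * k).choose k) / 2 ^ k
        = Fq N k + (-1 : ℚ) ^ k * (N.choose (k + 1)) * ((2 * k).choose k) / 2 ^ k := by
    intro k
    rw [Fq, Nat.choose_succ_succ]
    push_cast
    ring
  rw [Pq, Finset.sum_congr rfl fun k _ => hsplit k, Finset.sum_add_distrib]
  have h2 : ∑ k ∈ range (N + 1),
      (-1 : ℚ) ^ k * (N.choose (k + 1)) * ((2 * k).choose k) / 2 ^ k = Pq N := by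
    rw [Finset.sum_range_succ, Nat.choose_eq_zero_of_lt (Nat.lt_succ_self N)]
    simp [Pq]
  rw [h2, Aq]
  ring

private lemma P_val (ν : ℕ) :
    Pq (2 * ν + 2) = ((ν : ℚ) + 1) * ((2 * ν + 2).choose (ν + 1) : ℚ) / 2 ^ (2 * ν + 1) := by
  induction ν with
  | zero => norm_num [Pq, Finset.sum_range_succ]
  | succ ν ih =>
    have e1 : 2 * (ν + 1) + 2 = (2 * ν + 3) + 1 := by ring
    have e2 : 2 * ν + 3 = (2 * ν + 2) + 1 := by ring
    rw [e1, P_succ, e2, P_succ, ih]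
    have hAo : Aq (2 * ν + 2 + 1) = 0 := by
      have := A_odd (ν + 1); rwa [show 2 * (ν + 1) + 1 = 2 * ν + 2 + 1 by ring] at this
    have hAe : Aq (2 * ν + 2) = ((2 * (ν + 1)).choose (ν + 1) : ℚ) / 4 ^ (ν + 1) := by
      have := A_even (ν + 1); rwa [show 2 * (ν + 1) = 2 * ν + 2 by ring] at this
    rw [hAo, hAe]
    have hcb' := hcb (ν + 1)
    push_cast at hcb' ⊢
    have h2p : (2:ℚ) ^ (2 * ν + 1) ≠ 0 := by positivity
    have h4p : (4:ℚ) ^ (ν + 1) ≠ 0 := by positivity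
    have h2p2 : (2:ℚ) ^ (2 * (ν + 1) + 1) ≠ 0 := by positivity
    have hpow : (4:ℚ) ^ (ν + 1) = 2 ^ (2 * (ν + 1)) := by
      rw [show (4:ℚ) = 2 ^ 2 by norm_num, ← pow_mul, mul_comm 2 (ν + 1)]
    rw [hpow]
    have hν : ((ν:ℚ) + 1 + 1) ≠ 0 := by positivity
    simp only [show 2 * (ν + 1) = 2 * ν + 2 from by ring, show 2 * (ν + 1 + 1) = 2 * ν + 4 from by ring,
      show 2 * ν + 2 + 1 + 1 = 2 * ν + 4 from by ring, show ν + 1 + 1 = ν + 2 from by ring,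
      show 2 * (ν + 1) + 2 = 2 * ν + 4 from by ring] at hcb' hpow h2p2 ⊢
    field_simp
    linear_combination (-8 * (2:ℚ) ^ (ν * 4)) * hcb'

private lemma poch_two (ν : ℕ) : (ascPochhammer ℚ ν).eval 2 = ((Nat.factorial (ν + 1) : ℕ) : ℚ) := by
  induction ν with
  | zero => simp [ascPochhammer_zero]
  | succ ν ih =>
    rw [ascPochhammer_succ_right, Polynomial.eval_mul, ih]
    simp only [Polynomial.eval_add, Polynomial.eval_X, Polynomial.eval_natCast]
    rw [Nat.factorial_succ (ν + 1)]
    push_cast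
    ring

private lemma poch_half (ν : ℕ) :
    (ascPochhammer ℚ ν).eval (3 / 2) = ((Nat.factorial (2 * ν + 1) : ℕ) : ℚ) / (4 ^ ν * (Nat.factorial ν : ℕ)) := by
  induction ν with
  | zero => simp [ascPochhammer_zero]
  | succ ν ih =>
    rw [ascPochhammer_succ_right, Polynomial.eval_mul, ih]
    simp only [Polynomial.eval_add, Polynomial.eval_X, Polynomial.eval_natCast]
    have e1 : 2 * (ν + 1) + 1 = (2 * ν + 1) + 1 + 1 := by ring
    rw [e1, Nat.factorial_succ ((2 * ν + 1) + 1), Nat.factorial_succ (2 * ν + 1),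
      Nat.factorial_succ ν, pow_succ]
    have h1 : ((Nat.factorial ν : ℕ) : ℚ) ≠ 0 := Nat.cast_ne_zero.mpr (Nat.factorial_ne_zero ν)
    have h4 : (4:ℚ) ^ ν ≠ 0 := by positivity
    field_simp
    push_cast
    ring

theorem riordan_odd_pochhammer' (ν : ℕ) :
    ∑ k ∈ Finset.range (2 * ν + 2),
      (-1 : ℚ) ^ k * ((2 * ν + 2).choose (k + 1)) * ((2 * k).choose k) / 2 ^ k
      = (ν + 1) * (ascPochhammer ℚ ν).eval (3 / 2) / (ascPochhammer ℚ ν).eval 2 := by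
  have hP : (∑ k ∈ Finset.range (2 * ν + 2),
      (-1 : ℚ) ^ k * ((2 * ν + 2).choose (k + 1)) * ((2 * k).choose k) / 2 ^ k) = Pq (2 * ν + 2) := rfl
  have hfs : ((Nat.factorial (ν + 1) : ℕ) : ℚ) = ((ν : ℚ) + 1) * ((Nat.factorial ν : ℕ) : ℚ) := by
    rw [Nat.factorial_succ]; push_cast; ring
  have hpow : (2:ℚ) ^ (2 * ν + 1) = 2 * 4 ^ ν := by
    rw [pow_succ', show (4:ℚ) = 2 ^ 2 by norm_num, ← pow_mul, mul_comm 2 ν]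
  have hc := Nat.choose_mul_factorial_mul_factorial (show ν + 1 ≤ 2 * ν + 2 by omega)
  rw [show 2 * ν + 2 - (ν + 1) = ν + 1 by omega] at hc
  have hc' := congrArg (Nat.cast : ℕ → ℚ) hc
  push_cast at hc'
  have hfe : ((Nat.factorial (2 * ν + 2) : ℕ) : ℚ)
      = (2 * (ν:ℚ) + 2) * ((Nat.factorial (2 * ν + 1) : ℕ) : ℚ) := by
    rw [show 2 * ν + 2 = (2 * ν + 1) + 1 by ring, Nat.factorial_succ]
    push_cast; ring
  rw [hfe, hfs] at hc'
  have h1 : ((Nat.factorial ν : ℕ) : ℚ) ≠ 0 := Nat.cast_ne_zero.mpr (Nat.factorial_ne_zero ν)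
  have h3 : ((Nat.factorial (2 * ν + 1) : ℕ) : ℚ) ≠ 0 := Nat.cast_ne_zero.mpr (Nat.factorial_ne_zero _)
  have h4 : (4:ℚ) ^ ν ≠ 0 := by positivity
  rw [hP, P_val, poch_two, poch_half, hfs, hpow]
  field_simp
  have hν1 : ((ν:ℚ) + 1) ≠ 0 := by positivity
  apply mul_left_cancel₀ hν1
  linear_combination hc'

/-- Identity (3.4): the odd case of Theorem 2.1 with `i = 1`,
equivalent to Riordan's identity (1.7). -/
theorem riordan_odd_pochhammer (ν : ℕ) :
    ∑ k ∈ Finset.range (2 * ν + 2),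
      (-1 : ℚ) ^ k * ((2 * ν + 2).choose (k + 1)) * ((2 * k).choose k) / 2 ^ k
      = (ν + 1) * (ascPochhammer ℚ ν).eval (3 / 2) / (ascPochhammer ℚ ν).eval 2 := by
  exact riordan_odd_pochhammer' ν
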